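/- Integrated information Gamma operator at the invariant measure (intermediate step in the proof of Lemma 4.1): for every smooth compactly supported Φ : ℝ^d → ℝ, ∫_{ℝ^d} Γ_I(Φ,Φ)(x) π(x) dx = ∫_{ℝ^d} L̃Φ(x) · ⟨∇Φ(x), γ(x)⟩ π(x) dx. -/

import Mathlib

open MeasureTheory
open scoped BigOperators

noncomputable section

/-- `i`-th partial derivative of `f` at `x`, in the coordinate direction `i`. -/
def pderiv' {d : ℕ} (f : EuclideanSpace ℝ (Fin d) → ℝ) (i : Fin d)
    (x : EuclideanSpace ℝ (Fin d)) : ℝ :=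
  fderiv ℝ f x (EuclideanSpace.single i 1)

/-- second partial derivative `∂_i ∂_j f` at `x`. -/
def pderiv2 {d : ℕ} (f : EuclideanSpace ℝ (Fin d) → ℝ) (i j : Fin d)
    (x : EuclideanSpace ℝ (Fin d)) : ℝ :=
  pderiv' (fun y => pderiv' f j y) i x

/-- Laplacian `Δf`. -/
def lap {d : ℕ} (f : EuclideanSpace ℝ (Fin d) → ℝ) (x : EuclideanSpace ℝ (Fin d)) : ℝ :=
  ∑ i, pderiv2 f i i x

/-- carré du champ `Γ₁(g,h) = ⟨∇g, ∇h⟩`. -/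
def Gamma1 {d : ℕ} (g h : EuclideanSpace ℝ (Fin d) → ℝ) (x : EuclideanSpace ℝ (Fin d)) : ℝ :=
  ∑ i, pderiv' g i x * pderiv' h i x

/-- generator `L̃ h = ⟨∇ log π, ∇h⟩ + Δh`. -/
def genL {d : ℕ} (π h : EuclideanSpace ℝ (Fin d) → ℝ) (x : EuclideanSpace ℝ (Fin d)) : ℝ :=
  Gamma1 (fun y => Real.log (π y)) h x + lap h x

/-- Gamma two operator `Γ₂(f,f) = ½ L̃ Γ₁(f,f) − Γ₁(L̃f, f)`. -/
def Gamma2 {d : ℕ} (π f : EuclideanSpace ℝ (Fin d) → ℝ) (x : EuclideanSpace ℝ (Fin d)) : ℝ :=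
  (1/2 : ℝ) * genL π (fun y => Gamma1 f f y) x - Gamma1 (fun y => genL π f y) f x

/-- information Gamma operator `Γ_I(f,f) = −½⟨γ, ∇Γ₁(f,f)⟩ + (L̃f)·⟨∇f, γ⟩`. -/
def GammaI {d : ℕ} (π : EuclideanSpace ℝ (Fin d) → ℝ)
    (γ : EuclideanSpace ℝ (Fin d) → EuclideanSpace ℝ (Fin d))
    (f : EuclideanSpace ℝ (Fin d) → ℝ) (x : EuclideanSpace ℝ (Fin d)) : ℝ :=
  -(1/2 : ℝ) * (∑ i, γ x i * pderiv' (fun y => Gamma1 f f y) i x)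
    + genL π f x * (∑ i, pderiv' f i x * γ x i)

/-- the tensor `ℜ` of the paper:
`ℜ_{ij} = −∂²_{ij} log π + ((3−2d)/8) γ_i γ_j − (1/8) δ_{ij} Σ_k γ_k²
          + ½(γ_i ∂_j log π + γ_j ∂_i log π)`. -/
def Rtensor {d : ℕ} (π : EuclideanSpace ℝ (Fin d) → ℝ)
    (γ : EuclideanSpace ℝ (Fin d) → EuclideanSpace ℝ (Fin d))
    (i j : Fin d) (x : EuclideanSpace ℝ (Fin d)) : ℝ :=
  -pderiv2 (fun y => Real.log (π y)) i j x
    + ((3 - 2 * (d : ℝ)) / 8) * γ x i * γ x j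
    - (1/8 : ℝ) * (if i = j then ∑ k, (γ x k) ^ 2 else 0)
    + (1/2 : ℝ) * (γ x i * pderiv' (fun y => Real.log (π y)) j x
        + γ x j * pderiv' (fun y => Real.log (π y)) i x)

/-- the modified Hessian matrix `𝔥ess f`. -/
def hessM {d : ℕ} (γ : EuclideanSpace ℝ (Fin d) → EuclideanSpace ℝ (Fin d))
    (f : EuclideanSpace ℝ (Fin d) → ℝ) (i j : Fin d) (x : EuclideanSpace ℝ (Fin d)) : ℝ :=
  if i = j then
    pderiv2 f i i x + (1/2 : ℝ) * (∑ k, γ x k * pderiv' f k x)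
      - (1/2 : ℝ) * γ x i * pderiv' f i x
  else
    pderiv2 f i j x - (1/4 : ℝ) * (γ x i * pderiv' f j x + γ x j * pderiv' f i x)

/-- right-hand side of the Fokker–Planck equation `−∇·(p b) + Δp` with drift
`b = ∇ log π − γ`, evaluated at a density `p`. -/
def FPrhs {d : ℕ} (π : EuclideanSpace ℝ (Fin d) → ℝ)
    (γ : EuclideanSpace ℝ (Fin d) → EuclideanSpace ℝ (Fin d))
    (p : EuclideanSpace ℝ (Fin d) → ℝ) (x : EuclideanSpace ℝ (Fin d)) : ℝ :=
  -(∑ i, pderiv' (fun y => p y * (pderiv' (fun z => Real.log (π z)) i y - γ y i)) i x)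
    + lap p x

/-- `L̃* p = −∇·(p ∇ log π) + Δp`. -/
def Ltilstar {d : ℕ} (π p : EuclideanSpace ℝ (Fin d) → ℝ)
    (x : EuclideanSpace ℝ (Fin d)) : ℝ :=
  -(∑ i, pderiv' (fun y => p y * pderiv' (fun z => Real.log (π z)) i y) i x) + lap p x

/-- Arnold–Carlen tensor `(ℜ_AC)_{ij} = −∂²_{ij} log π − ½(∂_i γ_j + ∂_j γ_i)`. -/
def RAC {d : ℕ} (π : EuclideanSpace ℝ (Fin d) → ℝ)
    (γ : EuclideanSpace ℝ (Fin d) → EuclideanSpace ℝ (Fin d))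
    (i j : Fin d) (x : EuclideanSpace ℝ (Fin d)) : ℝ :=
  -pderiv2 (fun y => Real.log (π y)) i j x
    - (1/2 : ℝ) * (pderiv' (fun y => γ y j) i x + pderiv' (fun y => γ y i) j x)



lemma contDiff_pderiv' {d : ℕ} {f : EuclideanSpace ℝ (Fin d) → ℝ}
    (hf : ContDiff ℝ (⊤ : ℕ∞) f) (i : Fin d) : ContDiff ℝ (⊤ : ℕ∞) (pderiv' f i) :=
  (hf.fderiv_right (m := (⊤ : ℕ∞)) (by exact_mod_cast le_top)).clm_apply contDiff_const

lemma hcs_pderiv' {d : ℕ} {f : EuclideanSpace ℝ (Fin d) → ℝ}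
    (hf : HasCompactSupport f) (i : Fin d) : HasCompactSupport (pderiv' f i) :=
  hf.fderiv_apply ℝ (EuclideanSpace.single i 1)

lemma hcs_finset_sum {α : Type*} [TopologicalSpace α] {ι : Type*} (s : Finset ι)
    (f : ι → α → ℝ) (h : ∀ i ∈ s, HasCompactSupport (f i)) :
    HasCompactSupport fun x => ∑ i ∈ s, f i x := by
  classical
  induction s using Finset.induction_on with
  | empty =>
      simp only [Finset.sum_empty]
      have : (fun _ : α => (0:ℝ)) = (0 : α → ℝ) := rfl
      rw [this, HasCompactSupport]
      simp [tsupport]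
  | insert _ _ hnotmem ih =>
      rename_i a s
      simp only [Finset.sum_insert hnotmem]
      exact (h a (Finset.mem_insert_self a s)).add
        (ih fun i hi => h i (Finset.mem_insert_of_mem hi))

lemma integral_pderiv'_eq_zero {d : ℕ} (F : EuclideanSpace ℝ (Fin d) → ℝ)
    (hF : ContDiff ℝ (⊤ : ℕ∞) F) (hFc : HasCompactSupport F) (i : Fin d) :
    ∫ x, pderiv' F i x = 0 := by
  obtain ⟨C, hC⟩ := ContDiff.lipschitzWith_of_hasCompactSupport hFc hF
    (by simp)
  have h := LipschitzWith.integral_lineDeriv_mul_eq (μ := volume)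
      (LipschitzWith.const (α := EuclideanSpace ℝ (Fin d)) (1:ℝ)) hC hFc
      (-(EuclideanSpace.single i 1))
  have hz : ∀ x : EuclideanSpace ℝ (Fin d),
      lineDeriv ℝ (fun _ : EuclideanSpace ℝ (Fin d) => (1:ℝ)) x
        (-(EuclideanSpace.single i 1)) = 0 := by
    intro x; simp [lineDeriv]
  simp only [hz, zero_mul, integral_zero, neg_neg, mul_one] at h
  have he : ∀ x, lineDeriv ℝ F x (EuclideanSpace.single i 1) = pderiv' F i x := fun x =>
    ((hF.differentiable (by simp)) x).lineDeriv_eq_fderiv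
  rw [show (∫ x, pderiv' F i x) = ∫ x, lineDeriv ℝ F x (EuclideanSpace.single i 1) from
    by simp_rw [he], ← h]


/-- Intermediate step in the proof of Lemma 4.1:
`∫ Γ_I(Φ,Φ) π = ∫ L̃Φ ⟨∇Φ, γ⟩ π`. -/
theorem integrated_gamma_I_identity
    (d : ℕ) (hd : 1 ≤ d)
    (π : EuclideanSpace ℝ (Fin d) → ℝ) (hπ : ContDiff ℝ (⊤ : ℕ∞) π)
    (hπpos : ∀ x, 0 < π x)
    (γ : EuclideanSpace ℝ (Fin d) → EuclideanSpace ℝ (Fin d))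
    (hγ : ContDiff ℝ (⊤ : ℕ∞) γ)
    (hstat : ∀ x, ∑ i, pderiv' (fun y => π y * γ y i) i x = 0)
    (Φ : EuclideanSpace ℝ (Fin d) → ℝ) (hΦ : ContDiff ℝ (⊤ : ℕ∞) Φ)
    (hΦc : HasCompactSupport Φ) :
    ∫ x, GammaI π γ Φ x * π x =
      ∫ x, genL π Φ x * (∑ i, pderiv' Φ i x * γ x i) * π x := by
  classical
  have top1 : ((1:ℕ∞) : WithTop ℕ∞) ≤ ((⊤ : ℕ∞) : WithTop ℕ∞) := by exact_mod_cast le_top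
  set G : EuclideanSpace ℝ (Fin d) → ℝ := fun y => Gamma1 Φ Φ y with hGdef
  have hG : ContDiff ℝ (⊤ : ℕ∞) G :=
    ContDiff.sum fun i _ => (contDiff_pderiv' hΦ i).mul (contDiff_pderiv' hΦ i)
  have hGc : HasCompactSupport G := by
    have := (hΦc.fderiv ℝ).comp_left
      (g := fun L : EuclideanSpace ℝ (Fin d) →L[ℝ] ℝ =>
        ∑ i, L (EuclideanSpace.single i 1) * L (EuclideanSpace.single i 1)) (by simp)
    exact this
  have hγi : ∀ i : Fin d, ContDiff ℝ (⊤ : ℕ∞) (fun y => γ y i) := fun i => by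
    exact (EuclideanSpace.proj (𝕜 := ℝ) i).contDiff.comp hγ
  have hlogπ : ContDiff ℝ (⊤ : ℕ∞) (fun y => Real.log (π y)) :=
    hπ.log fun x => (hπpos x).ne'
  have hA : ∀ i : Fin d, ContDiff ℝ (⊤ : ℕ∞) (fun y => π y * γ y i) := fun i =>
    hπ.mul (hγi i)
  have hFi : ∀ i : Fin d, ContDiff ℝ (⊤ : ℕ∞) (fun y => (π y * γ y i) * G y) := fun i =>
    (hA i).mul hG
  have hFic : ∀ i : Fin d, HasCompactSupport (fun y => (π y * γ y i) * G y) := fun i =>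
    hGc.mul_left
  have hprod : ∀ (i : Fin d) x, pderiv' (fun y => (π y * γ y i) * G y) i x
      = pderiv' (fun y => π y * γ y i) i x * G x + (π x * γ x i) * pderiv' G i x := by
    intro i x
    have h1 : DifferentiableAt ℝ (fun y => π y * γ y i) x :=
      ((hA i).differentiable (by simp)) x
    have h2 : DifferentiableAt ℝ G x := (hG.differentiable (by simp)) x
    have hm := fderiv_fun_mul h1 h2
    simp only [pderiv', hm, ContinuousLinearMap.add_apply, ContinuousLinearMap.smul_apply,
      smul_eq_mul]
    ring
  have key : ∀ x, (∑ i, pderiv' (fun y => (π y * γ y i) * G y) i x)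
      = π x * ∑ i, γ x i * pderiv' G i x := by
    intro x
    calc (∑ i, pderiv' (fun y => (π y * γ y i) * G y) i x)
        = ∑ i, (pderiv' (fun y => π y * γ y i) i x * G x
            + (π x * γ x i) * pderiv' G i x) := by
          exact Finset.sum_congr rfl fun i _ => hprod i x
      _ = (∑ i, pderiv' (fun y => π y * γ y i) i x) * G x
            + ∑ i, (π x * γ x i) * pderiv' G i x := by
          rw [Finset.sum_add_distrib, Finset.sum_mul]
      _ = π x * ∑ i, γ x i * pderiv' G i x := by
          rw [hstat x, zero_mul, zero_add, Finset.mul_sum]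
          exact Finset.sum_congr rfl fun i _ => by ring
  have hzero : (∫ x, π x * ∑ i, γ x i * pderiv' G i x) = 0 := by
    have hint : ∀ i ∈ (Finset.univ : Finset (Fin d)),
        Integrable (fun x => pderiv' (fun y => (π y * γ y i) * G y) i x) := by
      intro i _
      exact ((contDiff_pderiv' (hFi i) i).continuous).integrable_of_hasCompactSupport
        (hcs_pderiv' (hFic i) i)
    calc (∫ x, π x * ∑ i, γ x i * pderiv' G i x)
        = ∫ x, ∑ i, pderiv' (fun y => (π y * γ y i) * G y) i x := by simp_rw [key]
      _ = ∑ i, ∫ x, pderiv' (fun y => (π y * γ y i) * G y) i x :=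
          integral_finset_sum _ hint
      _ = 0 := by
          rw [Finset.sum_eq_zero]
          intro i _
          exact integral_pderiv'_eq_zero _ (hFi i) (hFic i) i
  have hiden : ∀ x, GammaI π γ Φ x * π x
      = genL π Φ x * (∑ i, pderiv' Φ i x * γ x i) * π x
        + (-(1/2 : ℝ)) * (π x * ∑ i, γ x i * pderiv' G i x) := by
    intro x
    simp only [GammaI, ← hGdef]
    ring
  have hcontgen : Continuous (genL π Φ) := by
    have h1 : Continuous fun x => Gamma1 (fun y => Real.log (π y)) Φ x :=
      continuous_finset_sum _ fun i _ =>
        ((contDiff_pderiv' hlogπ i).continuous).mul (contDiff_pderiv' hΦ i).continuous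
    have h2 : Continuous fun x => lap Φ x :=
      continuous_finset_sum _ fun i _ =>
        (contDiff_pderiv' (contDiff_pderiv' hΦ i) i).continuous
    exact h1.add h2
  have hcontS2 : Continuous fun x => ∑ i, pderiv' Φ i x * γ x i :=
    continuous_finset_sum _ fun i _ =>
      (contDiff_pderiv' hΦ i).continuous.mul (hγi i).continuous
  have hS2c : HasCompactSupport fun x => ∑ i, pderiv' Φ i x * γ x i :=
    hcs_finset_sum _ _ fun i _ => (hcs_pderiv' hΦc i).mul_right
  have ha : Integrable (fun x => genL π Φ x * (∑ i, pderiv' Φ i x * γ x i) * π x) :=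
    ((hcontgen.mul hcontS2).mul hπ.continuous).integrable_of_hasCompactSupport
      (hS2c.mul_left.mul_right)
  have hinnerint : Integrable (fun x => π x * ∑ i, γ x i * pderiv' G i x) := by
    have hc : Continuous fun x => π x * ∑ i, γ x i * pderiv' G i x :=
      hπ.continuous.mul (continuous_finset_sum _ fun i _ =>
        (hγi i).continuous.mul (contDiff_pderiv' hG i).continuous)
    have hsupp : HasCompactSupport fun x => ∑ i, γ x i * pderiv' G i x :=
      hcs_finset_sum _ _ fun i _ => (hcs_pderiv' hGc i).mul_left
    exact hc.integrable_of_hasCompactSupport hsupp.mul_left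
  have hb : Integrable
      (fun x => (-(1/2 : ℝ)) * (π x * ∑ i, γ x i * pderiv' G i x)) :=
    hinnerint.const_mul _
  calc (∫ x, GammaI π γ Φ x * π x)
      = ∫ x, (genL π Φ x * (∑ i, pderiv' Φ i x * γ x i) * π x
          + (-(1/2 : ℝ)) * (π x * ∑ i, γ x i * pderiv' G i x)) := by simp_rw [hiden]
    _ = (∫ x, genL π Φ x * (∑ i, pderiv' Φ i x * γ x i) * π x)
          + ∫ x, (-(1/2 : ℝ)) * (π x * ∑ i, γ x i * pderiv' G i x) :=
        integral_add ha hb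
    _ = ∫ x, genL π Φ x * (∑ i, pderiv' Φ i x * γ x i) * π x := by
        rw [integral_const_mul, hzero, mul_zero, add_zero]


end
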